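/- arXiv:2112.09502 — 2 statements merged into one kernel-verified Lean document; each statement's English description precedes it below -/
import Mathlib

section
/- Let $S_1 = k[x_1,\ldots,x_N][[t]]$ over a field $k$ and let $h : S_1 \to S_2 := k[x_1,\ldots,x_N]((t))$ be the localization at $t$. Let $P$ be a prime ideal of $S_2$ and set $Q := P \cap S_1$. If $g \in k[[t]]$ and $h' \in (x_1,\ldots,x_N)S_1$ satisfy $g + h' \in Q$ and $g \neq 0$, and if moreover $Q$ is invariant under all ring automorphisms $T_c$ ($c \in k^\times$) of $S_1$ given by $T_c(t) = c^{-d}t$, $T_c(x_i) = c^{e_i}x_i$ (for fixed integers $d \ge 1$ and $0 < e_i \le d$) with $k$ infinite, then $t^a \in Q$ for some $a \ge 0$, and consequently $P = S_2$, a contradiction; hence no such $g$ exists. Equivalently: if $Q$ is a $T_c$-invariant prime ideal of $S_1$ with $Q S_2 \neq S_2$, then $Q \subseteq (x_1,\ldots,x_N, t^{s+1})$ for every $s \ge 0$, i.e. $Q \subseteq (x_1,\ldots,x_N)$. -/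
/-- The map `T_c` on `S₁ = k[x₁,…,x_N][[t]]` given by `t ↦ c^{-d} t`, `xᵢ ↦ c^{eᵢ} xᵢ`. -/
noncomputable def Tc {k : Type*} [Field k] {N : ℕ} (d : ℕ) (e : Fin N → ℕ) (c : k)
    (f : PowerSeries (MvPolynomial (Fin N) k)) : PowerSeries (MvPolynomial (Fin N) k) :=
  PowerSeries.mk fun n =>
    (c⁻¹ ^ (d * n)) •
      (MvPolynomial.aeval (fun i : Fin N => (c ^ e i) • MvPolynomial.X i)
        (PowerSeries.coeff n f))

namespace Statement8

open PowerSeries MvPolynomial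

variable {k : Type*} [Field k] {N : ℕ}

def wdn (e : Fin N → ℕ) (m : Fin N →₀ ℕ) : ℕ := ∑ i, e i * m i

noncomputable def compP (e : Fin N → ℕ) (w : ℤ) (p : MvPolynomial (Fin N) k) :
    MvPolynomial (Fin N) k :=
  ∑ m ∈ p.support, if (wdn e m : ℤ) = w then monomial m (coeff m p) else 0

lemma coeff_compP (e : Fin N → ℕ) (w : ℤ) (p : MvPolynomial (Fin N) k) (m : Fin N →₀ ℕ) :
    coeff m (compP e w p) = if (wdn e m : ℤ) = w then coeff m p else 0 := by
  classical
  rw [compP, MvPolynomial.coeff_sum]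
  by_cases hm : m ∈ p.support
  · rw [Finset.sum_eq_single m]
    · split_ifs with h <;>
        simp [MvPolynomial.coeff_monomial]
    · intro b _ hbm
      simp only [apply_ite (MvPolynomial.coeff m), MvPolynomial.coeff_monomial,
        MvPolynomial.coeff_zero, if_neg hbm, ite_self]
    · intro h; exact absurd hm h
  · have h0 : MvPolynomial.coeff m p = 0 := by rwa [MvPolynomial.notMem_support_iff] at hm
    rw [h0, ite_self]
    apply Finset.sum_eq_zero
    intro b hb
    have hbm : b ≠ m := fun h => hm (h ▸ hb)
    simp only [apply_ite (MvPolynomial.coeff m), MvPolynomial.coeff_monomial,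
      MvPolynomial.coeff_zero, if_neg hbm, ite_self]

lemma aeval_scale (e : Fin N → ℕ) (c : k) (s : Fin N →₀ ℕ) (a : k) :
    (MvPolynomial.aeval (fun i : Fin N => (c ^ e i) • MvPolynomial.X i))
      (monomial s a) = MvPolynomial.C (c ^ wdn e s) * monomial s a := by
  classical
  rw [aeval_monomial]
  simp only [MvPolynomial.smul_eq_C_mul, mul_pow, ← map_pow, ← pow_mul, Finsupp.prod,
    Finset.prod_mul_distrib, ← map_prod, Finset.prod_pow_eq_pow_sum]
  have hsum : ∑ i ∈ s.support, e i * s i = wdn e s := by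
    rw [wdn]
    exact Finset.sum_subset (Finset.subset_univ _)
      (fun i _ hi => by
        rw [Finsupp.notMem_support_iff] at hi
        rw [hi, mul_zero])
  rw [hsum, MvPolynomial.algebraMap_eq, monomial_eq, Finsupp.prod]
  ring


noncomputable def comp (d : ℕ) (e : Fin N → ℕ) (w : ℤ)
    (f : PowerSeries (MvPolynomial (Fin N) k)) : PowerSeries (MvPolynomial (Fin N) k) :=
  PowerSeries.mk fun n => compP e (w + d * n) (PowerSeries.coeff n f)

lemma coeff_aeval_scale (e : Fin N → ℕ) (c : k) (p : MvPolynomial (Fin N) k)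
    (m : Fin N →₀ ℕ) :
    coeff m ((MvPolynomial.aeval (fun i : Fin N => (c ^ e i) • MvPolynomial.X i)) p)
      = c ^ wdn e m * coeff m p := by
  classical
  conv_lhs => rw [p.as_sum]
  rw [map_sum, MvPolynomial.coeff_sum]
  have hterm : ∀ s ∈ p.support,
      coeff m ((MvPolynomial.aeval (fun i : Fin N => (c ^ e i) • MvPolynomial.X i))
        (monomial s (coeff s p))) =
      (if s = m then c ^ wdn e m * coeff s p else 0) := by
    intro s _
    rw [aeval_scale, MvPolynomial.coeff_C_mul, MvPolynomial.coeff_monomial]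
    by_cases h : s = m
    · subst h; simp
    · simp [h]
  rw [Finset.sum_congr rfl hterm, Finset.sum_ite_eq' p.support m
    (fun s => c ^ wdn e m * coeff s p)]
  by_cases hm : m ∈ p.support
  · rw [if_pos hm]
  · have h0 : coeff m p = 0 := by rwa [MvPolynomial.notMem_support_iff] at hm
    rw [if_neg hm, h0, mul_zero]

lemma coeff_Tc (d : ℕ) (e : Fin N → ℕ) (c : k) (hc : c ≠ 0)
    (f : PowerSeries (MvPolynomial (Fin N) k)) (n : ℕ) (m : Fin N →₀ ℕ) :
    coeff m (PowerSeries.coeff n (Tc d e c f))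
      = c ^ ((wdn e m : ℤ) - d * n) * coeff m (PowerSeries.coeff n f) := by
  rw [Tc, PowerSeries.coeff_mk, MvPolynomial.coeff_smul, coeff_aeval_scale]
  rw [smul_eq_mul, ← mul_assoc]
  congr 1
  rw [inv_pow, ← zpow_natCast c (d * n), ← zpow_natCast c (wdn e m), ← zpow_neg,
    ← zpow_add₀ hc, sub_eq_neg_add]
  push_cast
  ring_nf

lemma coeff_comp (d : ℕ) (e : Fin N → ℕ) (w : ℤ)
    (f : PowerSeries (MvPolynomial (Fin N) k)) (n : ℕ) (m : Fin N →₀ ℕ) :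
    coeff m (PowerSeries.coeff n (comp d e w f))
      = if (wdn e m : ℤ) - d * n = w then coeff m (PowerSeries.coeff n f) else 0 := by
  rw [comp, PowerSeries.coeff_mk, coeff_compP]
  congr 1
  simp only [eq_iff_iff]
  omega

lemma Tc_eq_sum (d : ℕ) (e : Fin N → ℕ) (f : PowerSeries (MvPolynomial (Fin N) k))
    (M : ℕ) (W : Finset ℤ)
    (hW : ∀ n < M, ∀ m ∈ (PowerSeries.coeff n f).support, (wdn e m : ℤ) - d * n ∈ W)
    (c : k) (hc : c ≠ 0) (n : ℕ) (hn : n < M) :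
    PowerSeries.coeff n (Tc d e c f)
      = ∑ w ∈ W, c ^ w • PowerSeries.coeff n (comp d e w f) := by
  classical
  apply MvPolynomial.ext
  intro m
  rw [coeff_Tc d e c hc f n m, MvPolynomial.coeff_sum]
  have hterm : ∀ w ∈ W, coeff m (c ^ w • PowerSeries.coeff n (comp d e w f))
      = if w = (wdn e m : ℤ) - d * n
          then c ^ w * coeff m (PowerSeries.coeff n f) else 0 := by
    intro w _
    rw [MvPolynomial.coeff_smul, coeff_comp, smul_eq_mul]
    by_cases h : (wdn e m : ℤ) - d * n = w
    · rw [if_pos h, if_pos h.symm]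
    · rw [if_neg h, if_neg (fun hh => h hh.symm), mul_zero]
  rw [Finset.sum_congr rfl hterm, Finset.sum_ite_eq' W ((wdn e m : ℤ) - d * n)
    (fun w => c ^ w * coeff m (PowerSeries.coeff n f))]
  by_cases hmem : ((wdn e m : ℤ) - d * n) ∈ W
  · rw [if_pos hmem]
  · rw [if_neg hmem]
    by_cases h0 : coeff m (PowerSeries.coeff n f) = 0
    · rw [h0, mul_zero]
    · exact absurd (hW n hn m (MvPolynomial.mem_support_iff.mpr h0)) hmem

section Extract

variable [CharZero k] {V : Type*} [AddCommGroup V] [Module k V] (U : Submodule k V)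

lemma extract_nat (M : ℕ) (v : ℕ → V)
    (h : ∀ c : k, c ≠ 0 → (∑ j ∈ Finset.range M, c ^ j • v j) ∈ U) :
    ∀ j < M, v j ∈ U := by
  intro j hj
  set cv : Fin M → k := fun i => ((i : ℕ) + 1 : ℕ) with hcv
  have hinj : Function.Injective cv := by
    intro a b hab
    simp only [hcv, Nat.cast_inj] at hab
    exact Fin.ext (by omega)
  set A := Matrix.vandermonde cv with hA
  have hdet : IsUnit A.det := by
    rw [isUnit_iff_ne_zero]
    exact Matrix.det_vandermonde_ne_zero_iff.mpr hinj
  have hinvA : A⁻¹ * A = 1 := Matrix.nonsing_inv_mul A hdet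
  set vf : Fin M → V := fun l => v (l : ℕ) with hvf
  have key : ∀ i, (∑ l, A i l • vf l) ∈ U := by
    intro i
    have hne : cv i ≠ 0 := by
      simp only [hcv]
      exact_mod_cast Nat.succ_ne_zero (i : ℕ)
    have h2 := h (cv i) hne
    rw [Finset.sum_range (n := M) (fun j => cv i ^ j • v j)] at h2
    exact h2
  have hvj : vf ⟨j, hj⟩ = ∑ i, (A⁻¹ ⟨j, hj⟩ i) • (∑ l, A i l • vf l) := by
    simp_rw [Finset.smul_sum, smul_smul]
    rw [Finset.sum_comm]
    have hs : ∀ l : Fin M, (∑ i, (A⁻¹ ⟨j, hj⟩ i * A i l) • vf l)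
        = ((A⁻¹ * A) ⟨j, hj⟩ l) • vf l := by
      intro l
      rw [Matrix.mul_apply, ← Finset.sum_smul]
    rw [Finset.sum_congr rfl fun l _ => hs l, hinvA]
    simp [Matrix.one_apply]
  have : vf ⟨j, hj⟩ ∈ U := by
    rw [hvj]
    exact Submodule.sum_mem _ fun i _ => Submodule.smul_mem _ _ (key i)
  exact this

lemma extract_int (W : Finset ℤ) (v : ℤ → V)
    (h : ∀ c : k, c ≠ 0 → (∑ w ∈ W, c ^ w • v w) ∈ U) : ∀ w ∈ W, v w ∈ U := by
  classical
  rcases W.eq_empty_or_nonempty with rfl | hne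
  · simp
  set L := W.min' hne with hL
  set M := (W.max' hne - L).toNat + 1 with hM
  have hmem : ∀ w ∈ W, (w - L).toNat < M ∧ L + ((w - L).toNat : ℤ) = w := by
    intro w hw
    have h1 : L ≤ w := W.min'_le w hw
    have h2 : w ≤ W.max' hne := W.le_max' w hw
    omega
  set v' : ℕ → V := fun j => if L + (j : ℤ) ∈ W then v (L + (j : ℤ)) else 0 with hv'
  have hv'eq : ∀ w ∈ W, v' ((w - L).toNat) = v w := by
    intro w hw
    have := (hmem w hw).2
    simp only [hv', this, if_pos hw]
  have hinjOn : ∀ w1 ∈ W, ∀ w2 ∈ W, (w1 - L).toNat = (w2 - L).toNat → w1 = w2 := by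
    intro w1 h1 w2 h2 heq
    have a1 := (hmem w1 h1).2
    have a2 := (hmem w2 h2).2
    omega
  have key : ∀ c : k, c ≠ 0 → (∑ j ∈ Finset.range M, c ^ j • v' j) ∈ U := by
    intro c hc
    have heq : (∑ j ∈ Finset.range M, c ^ j • v' j)
        = c ^ (-L) • ∑ w ∈ W, c ^ w • v w := by
      rw [Finset.smul_sum]
      have hterm : ∀ w ∈ W, c ^ (-L) • (c ^ w • v w) = c ^ (w - L) • v w := by
        intro w _
        rw [smul_smul, ← zpow_add₀ hc]
        congr 1
        ring
      rw [Finset.sum_congr rfl hterm]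
      have hsub : (W.image fun w => (w - L).toNat) ⊆ Finset.range M := by
        intro j hjm
        rcases Finset.mem_image.mp hjm with ⟨w, hw, rfl⟩
        exact Finset.mem_range.mpr (hmem w hw).1
      rw [← Finset.sum_subset hsub]
      · rw [Finset.sum_image hinjOn]
        apply Finset.sum_congr rfl
        intro w hw
        rw [hv'eq w hw]
        congr 1
        rw [← zpow_natCast c, Int.toNat_of_nonneg]
        have := W.min'_le w hw
        omega
      · intro j _ hjm
        have : L + (j : ℤ) ∉ W := by
          intro hcon
          apply hjm
          apply Finset.mem_image.mpr
          exact ⟨L + j, hcon, by omega⟩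
        simp [hv', this]
    rw [heq]
    exact Submodule.smul_mem _ _ (h c hc)
  intro w hw
  have := extract_nat U M v' key ((w - L).toNat) (hmem w hw).1
  rwa [hv'eq w hw] at this

end Extract

lemma comp_mem_mod [CharZero k] (d : ℕ) (e : Fin N → ℕ)
    (Q : Ideal (PowerSeries (MvPolynomial (Fin N) k)))
    (hinv : ∀ c : k, c ≠ 0 → ∀ f ∈ Q, Tc d e c f ∈ Q)
    (f : PowerSeries (MvPolynomial (Fin N) k)) (hf : f ∈ Q) (M : ℕ) (w₀ : ℤ) :
    ∃ q ∈ Q, ∀ n < M,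
      PowerSeries.coeff n q = PowerSeries.coeff n (comp d e w₀ f) := by
  classical
  set W : Finset ℤ := insert w₀ ((Finset.range M).biUnion fun n =>
    (PowerSeries.coeff n f).support.image fun m => (wdn e m : ℤ) - d * n) with hWdef
  have hW : ∀ n < M, ∀ m ∈ (PowerSeries.coeff n f).support,
      (wdn e m : ℤ) - d * n ∈ W := by
    intro n hn m hm
    apply Finset.mem_insert_of_mem
    apply Finset.mem_biUnion.mpr
    exact ⟨n, Finset.mem_range.mpr hn, Finset.mem_image_of_mem _ hm⟩
  let U : Submodule k (Fin M → MvPolynomial (Fin N) k) :=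
    { carrier := {x | ∃ q ∈ Q, ∀ n : Fin M, PowerSeries.coeff (n : ℕ) q = x n}
      add_mem' := by
        rintro x y ⟨qx, hqx, hx⟩ ⟨qy, hqy, hy⟩
        exact ⟨qx + qy, Q.add_mem hqx hqy, fun n => by
          rw [map_add, hx n, hy n]; rfl⟩
      zero_mem' := ⟨0, Q.zero_mem, fun n => by simp⟩
      smul_mem' := by
        rintro c x ⟨q, hq, hx⟩
        refine ⟨c • q, ?_, fun n => ?_⟩
        · rw [Algebra.smul_def]
          exact Q.mul_mem_left _ hq
        · rw [PowerSeries.coeff_smul, hx n]; rfl }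
  have hU : ∀ w ∈ W,
      (fun n : Fin M => PowerSeries.coeff (n : ℕ) (comp d e w f)) ∈ U := by
    apply extract_int U W
      (fun w => fun n : Fin M => PowerSeries.coeff (n : ℕ) (comp d e w f))
    intro c hc
    refine ⟨Tc d e c f, hinv c hc f hf, fun n => ?_⟩
    rw [Tc_eq_sum d e f M W hW c hc n n.isLt, Finset.sum_apply]
    rfl
  obtain ⟨q, hq, hmatch⟩ := hU w₀ (Finset.mem_insert_self _ _)
  exact ⟨q, hq, fun n hn => (hmatch ⟨n, hn⟩)⟩

lemma constcoeff_zero [CharZero k] (d : ℕ) (hd : 1 ≤ d) (e : Fin N → ℕ)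
    (he : ∀ i, 0 < e i)
    (Q : Ideal (PowerSeries (MvPolynomial (Fin N) k)))
    (hinv : ∀ c : k, c ≠ 0 → ∀ f ∈ Q, Tc d e c f ∈ Q)
    (hQ : Ideal.map
        (algebraMap (PowerSeries (MvPolynomial (Fin N) k))
          (Localization.Away (PowerSeries.X : PowerSeries (MvPolynomial (Fin N) k)))) Q ≠ ⊤)
    (f : PowerSeries (MvPolynomial (Fin N) k)) (hf : f ∈ Q) (n₀ : ℕ) :
    MvPolynomial.coeff 0 (PowerSeries.coeff n₀ f) = 0 := by
  classical
  by_contra hne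
  have hex : ∃ n, MvPolynomial.coeff 0 (PowerSeries.coeff n f) ≠ 0 := ⟨n₀, hne⟩
  set a := Nat.find hex with ha
  have hspec : MvPolynomial.coeff 0 (PowerSeries.coeff a f) ≠ 0 := Nat.find_spec hex
  obtain ⟨q, hqQ, hmatch⟩ := comp_mem_mod d e Q hinv f hf (a + 1) (-(d * a))
  have hdpos : (0:ℤ) < (d:ℤ) := by exact_mod_cast hd
  have hq0 : ∀ n, n < a → PowerSeries.coeff n q = 0 := by
    intro n hn
    rw [hmatch n (by omega)]
    apply MvPolynomial.ext
    intro m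
    rw [coeff_comp, MvPolynomial.coeff_zero]
    have h1 : (0:ℤ) ≤ (wdn e m : ℤ) := Int.natCast_nonneg _
    have h2 : (d:ℤ) * n < (d:ℤ) * a :=
      mul_lt_mul_of_pos_left (by exact_mod_cast hn) hdpos
    rw [if_neg (by omega)]
  have hqa : PowerSeries.coeff a q
      = MvPolynomial.C (MvPolynomial.coeff 0 (PowerSeries.coeff a f)) := by
    rw [hmatch a (by omega)]
    apply MvPolynomial.ext
    intro m
    rw [coeff_comp, MvPolynomial.coeff_C]
    by_cases hm : m = 0
    · subst hm
      have hw0 : wdn e (0 : Fin N →₀ ℕ) = 0 := by simp [wdn]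
      rw [if_pos (by rw [hw0]; push_cast; ring), if_pos rfl]
    · obtain ⟨i, hi⟩ : ∃ i, m i ≠ 0 := by
        by_contra hcon
        push_neg at hcon
        exact hm (Finsupp.ext hcon)
      have hwpos : 0 < wdn e m := by
        have hle : e i * m i ≤ wdn e m :=
          Finset.single_le_sum (f := fun i => e i * m i)
            (fun _ _ => Nat.zero_le _) (Finset.mem_univ i)
        have : 0 < e i * m i := Nat.mul_pos (he i) (Nat.pos_of_ne_zero hi)
        omega
    -- condition wdn - d a = -(d a) iff wdn = 0, false
      rw [if_neg (by omega), if_neg (by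
        intro h0; exact hm h0.symm)]
  have hdvd : (PowerSeries.X : PowerSeries (MvPolynomial (Fin N) k)) ^ a ∣ q :=
    PowerSeries.X_pow_dvd_iff.mpr hq0
  obtain ⟨u, hu⟩ := hdvd
  have hcu : PowerSeries.coeff 0 u
      = MvPolynomial.C (MvPolynomial.coeff 0 (PowerSeries.coeff a f)) := by
    have := PowerSeries.coeff_X_pow_mul u a 0
    rw [zero_add] at this
    rw [← this, ← hu, hqa]
  have hunit : IsUnit u := by
    rw [PowerSeries.isUnit_iff_constantCoeff, ← PowerSeries.coeff_zero_eq_constantCoeff_apply,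
      hcu]
    exact IsUnit.of_mul_eq_one
      (MvPolynomial.C (MvPolynomial.coeff 0 (PowerSeries.coeff a f))⁻¹)
      (by rw [← map_mul, mul_inv_cancel₀ hspec, map_one])
  obtain ⟨U', hU'⟩ := hunit
  have hXa : (PowerSeries.X : PowerSeries (MvPolynomial (Fin N) k)) ^ a ∈ Q := by
    have hXaq : (PowerSeries.X : PowerSeries (MvPolynomial (Fin N) k)) ^ a = q * ↑U'⁻¹ := by
      rw [hu, ← hU', mul_assoc, Units.mul_inv, mul_one]
    rw [hXaq]
    exact Q.mul_mem_right _ hqQ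
  apply hQ
  apply Ideal.eq_top_of_isUnit_mem _ (Ideal.mem_map_of_mem _ hXa)
  rw [map_pow]
  exact (IsLocalization.Away.algebraMap_isUnit
    (S := Localization.Away (PowerSeries.X : PowerSeries (MvPolynomial (Fin N) k)))
    PowerSeries.X).pow a

lemma mem_span_of_constcoeff (f : PowerSeries (MvPolynomial (Fin N) k))
    (h : ∀ n, MvPolynomial.coeff 0 (PowerSeries.coeff n f) = 0) :
    f ∈ Ideal.span (Set.range fun i : Fin N =>
      PowerSeries.C (R := MvPolynomial (Fin N) k) (MvPolynomial.X i)) := by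
  classical
  have hcoef : ∀ n, (PowerSeries.coeff n f) ∈
      Ideal.span (Set.range (X : Fin N → MvPolynomial (Fin N) k)) := by
    intro n
    rw [(PowerSeries.coeff n f).as_sum]
    apply Ideal.sum_mem
    intro m hm
    by_cases hm0 : m = 0
    · subst hm0
      rw [h n]
      simp
    · obtain ⟨i, hi⟩ : ∃ i, m i ≠ 0 := by
        by_contra hcon
        push_neg at hcon
        exact hm0 (Finsupp.ext hcon)
      obtain ⟨r, hr⟩ := (MvPolynomial.X_dvd_monomial (i := i) (j := m)
        (r := MvPolynomial.coeff m (PowerSeries.coeff n f))).mpr (Or.inr hi)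
      rw [hr]
      exact Ideal.mul_mem_right _ _ (Ideal.subset_span ⟨i, rfl⟩)
  have hchoice : ∀ n, ∃ b : Fin N → MvPolynomial (Fin N) k,
      ∑ i, b i • (X i : MvPolynomial (Fin N) k) = PowerSeries.coeff n f :=
    fun n => (Submodule.mem_span_range_iff_exists_fun _).mp (hcoef n)
  choose b hb using hchoice
  have hfeq : f = ∑ i, (PowerSeries.mk fun n => b n i) *
      PowerSeries.C (R := MvPolynomial (Fin N) k) (MvPolynomial.X i) := by
    apply PowerSeries.ext
    intro n
    rw [map_sum]
    have hterm : ∀ i : Fin N, PowerSeries.coeff n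
        ((PowerSeries.mk fun n => b n i) * PowerSeries.C (R := MvPolynomial (Fin N) k) (X i))
        = b n i * X i := fun i => by
      rw [PowerSeries.coeff_mul_C, PowerSeries.coeff_mk]
    rw [Finset.sum_congr rfl fun i _ => hterm i]
    rw [← hb n]
    apply Finset.sum_congr rfl
    intro i _
    rw [smul_eq_mul]
  rw [hfeq]
  apply Ideal.sum_mem
  intro i _
  exact Ideal.mul_mem_left _ _ (Ideal.subset_span ⟨i, rfl⟩)

end Statement8

/-- Let `S₁ = k[x₁,…,x_N][[t]]` and `S₂` its localization at `t`.  If `Q`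
is a prime ideal of `S₁` invariant under all the automorphisms `T_c` (`c ∈ kˣ`) and
`Q S₂ ≠ S₂`, then `Q ⊆ (x₁,…,x_N)`. -/
theorem invariant_prime_le_span_X
    {k : Type*} [Field k] [IsAlgClosed k] [CharZero k] {N : ℕ}
    (d : ℕ) (hd : 1 ≤ d) (e : Fin N → ℕ) (he : ∀ i, 0 < e i ∧ e i ≤ d)
    (Q : Ideal (PowerSeries (MvPolynomial (Fin N) k))) [Q.IsPrime]
    (hinv : ∀ c : k, c ≠ 0 → ∀ f ∈ Q, Tc d e c f ∈ Q)
    (hQ : Ideal.map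
        (algebraMap (PowerSeries (MvPolynomial (Fin N) k))
          (Localization.Away (PowerSeries.X : PowerSeries (MvPolynomial (Fin N) k)))) Q ≠ ⊤) :
    Q ≤ Ideal.span (Set.range fun i : Fin N =>
      PowerSeries.C (R := MvPolynomial (Fin N) k) (MvPolynomial.X i)) := by
  intro f hf
  apply Statement8.mem_span_of_constcoeff
  intro n
  exact Statement8.constcoeff_zero d hd e (fun i => (he i).1) Q hinv hQ f hf n
end

section
/- Let $R$ be a commutative ring and let $I$ be an ideal of $R$ with minimal primes $P_1,\ldots,P_m$. Suppose a group $H$ acts on $R$ by ring automorphisms preserving $I$, and suppose $H$ is divisible in the sense that every element of $H$ is an $m!$-th power. Then each $P_i$ is invariant under the action of $H$. -/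
open Pointwise

/-- Let `I` be an ideal of a Noetherian commutative ring `R` with `m`
minimal primes, and let a group `H` act on `R` by ring automorphisms preserving `I`.  If
every element of `H` is an `m!`-th power, then each minimal prime of `I` is `H`-invariant. -/
theorem minimalPrimes_invariant_of_divisible_group_action
    {R : Type*} [CommRing R] [IsNoetherianRing R]
    {H : Type*} [Group H] [MulSemiringAction H R]
    (I : Ideal R) (hI : ∀ (σ : H), ∀ x ∈ I, σ • x ∈ I)
    (m : ℕ) (hm : I.minimalPrimes.ncard = m)
    (hdiv : ∀ σ : H, ∃ τ : H, τ ^ (Nat.factorial m) = σ) :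
    ∀ P ∈ I.minimalPrimes, ∀ (σ : H), ∀ x ∈ P, σ • x ∈ P := by
  classical
  -- the action fixes `I`
  have hIeq : ∀ σ : H, σ • I = I := by
    intro σ
    apply le_antisymm
    · intro x hx
      rw [Ideal.mem_pointwise_smul_iff_inv_smul_mem] at hx
      simpa using hI σ _ hx
    · intro x hx
      rw [Ideal.mem_pointwise_smul_iff_inv_smul_mem]
      exact hI σ⁻¹ x hx
  -- the action permutes the minimal primes over `I`
  have hmem : ∀ (σ : H), ∀ P ∈ I.minimalPrimes, σ • P ∈ I.minimalPrimes := by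
    intro σ P hP
    obtain ⟨⟨hPp, hIP⟩, hmin⟩ := hP
    haveI := hPp
    refine ⟨⟨inferInstance, ?_⟩, ?_⟩
    · rw [← hIeq σ]
      exact Ideal.pointwise_smul_le_pointwise_smul_iff.mpr hIP
    · rintro q ⟨hq, hIq⟩ hle
      haveI := hq
      have h1 : σ⁻¹ • q ≤ P := by
        have := Ideal.pointwise_smul_le_pointwise_smul_iff (a := σ⁻¹) (S := q) (T := σ • P)
        rw [inv_smul_smul] at this
        exact this.mpr hle
      have h2 : P ≤ σ⁻¹ • q := by
        refine hmin ⟨inferInstance, ?_⟩ h1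
        rw [← hIeq σ⁻¹]
        exact Ideal.pointwise_smul_le_pointwise_smul_iff.mpr hIq
      calc σ • P ≤ σ • σ⁻¹ • q := Ideal.pointwise_smul_le_pointwise_smul_iff.mpr h2
        _ = q := smul_inv_smul σ q
  -- finiteness of the set of minimal primes
  have hfin : I.minimalPrimes.Finite := by
    rw [Ideal.minimalPrimes_eq_comap]
    exact (minimalPrimes.finite_of_isNoetherianRing (R ⧸ I)).image _
  haveI inst := hfin.fintype
  intro P hP σ x hx
  obtain ⟨τ, rfl⟩ := hdiv σ
  -- the permutation induced by τ
  let e : Equiv.Perm I.minimalPrimes :=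
    { toFun := fun p => ⟨τ • p.1, hmem τ p.1 p.2⟩
      invFun := fun p => ⟨τ⁻¹ • p.1, hmem τ⁻¹ p.1 p.2⟩
      left_inv := fun p => Subtype.ext (inv_smul_smul τ p.1)
      right_inv := fun p => Subtype.ext (smul_inv_smul τ p.1) }
  have hpow : ∀ n (p : I.minimalPrimes), ((e ^ n) p).1 = τ ^ n • p.1 := by
    intro n
    induction n with
    | zero => intro p; simp
    | succ n ih =>
      intro p
      rw [pow_succ', Equiv.Perm.mul_apply, pow_succ', mul_smul,
        show ((e ((e ^ n) p) : Ideal R)) = τ • ((e ^ n) p : Ideal R) from rfl, ih]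
  have hcard : Fintype.card I.minimalPrimes = m := by
    rw [← hm, ← Nat.card_coe_set_eq, Nat.card_eq_fintype_card]
  have he : e ^ (Nat.factorial m) = 1 := by
    have h1 : e ^ (Fintype.card (Equiv.Perm I.minimalPrimes)) = 1 := pow_card_eq_one
    have h2 : orderOf e ∣ Fintype.card (Equiv.Perm I.minimalPrimes) := orderOf_dvd_card
    rw [Fintype.card_perm, hcard] at h1
    exact h1
  have hfix : (τ ^ Nat.factorial m) • P = P := by
    have h3 := hpow (Nat.factorial m) ⟨P, hP⟩
    rw [he] at h3
    simpa using h3.symm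
  rw [← hfix]
  exact Ideal.smul_mem_pointwise_smul _ _ _ hx
end
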